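/- Let B be a Lebesgue-measurable subset of [0,1] and let g_1,…,g_n ∈ L¹[0,1]. Then there exists a measurable subset B₁ of B such that μ(B₁) = μ(B)/2 and ∫_{B₁} g_i dμ = (1/2) ∫_{B} g_i dμ for every i = 1,…,n. -/

import Mathlib

open MeasureTheory Filter Topology

noncomputable section

/-- Lebesgue measure restricted to `[0,1]`. -/
abbrev μ01 : Measure ℝ := MeasureTheory.volume.restrict (Set.Icc 0 1)

/-- The space `L¹[0,1]`. -/
abbrev L1 : Type := Lp ℝ 1 μ01

lemma μ01_ne_top (s : Set ℝ) : μ01 s ≠ ⊤ := by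
  refine ne_of_lt (lt_of_le_of_lt (measure_mono (Set.subset_univ s)) ?_)
  rw [Measure.restrict_apply_univ, Real.volume_Icc]
  norm_num

open Classical in
/-- The indicator function `1ₛ` as an element of `L¹[0,1]`. -/
def indL1 (s : Set ℝ) : L1 :=
  if h : MeasurableSet s then indicatorConstLp 1 h (μ01_ne_top s) (1:ℝ) else 0

/-- An operator `T : L¹[0,1] → Y` is completely continuous if it maps weakly
convergent sequences to norm convergent sequences. -/
def CompletelyContinuous {Y : Type*} [NormedAddCommGroup Y] [NormedSpace ℝ Y]
    (T : L1 →L[ℝ] Y) : Prop :=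
  ∀ (f : ℕ → L1) (f₀ : L1),
    (∀ φ : L1 →L[ℝ] ℝ, Tendsto (fun t => φ (f t)) atTop (𝓝 (φ f₀))) →
    Tendsto (fun t => T (f t)) atTop (𝓝 (T f₀))

instance : IsFiniteMeasure μ01 :=
  ⟨lt_top_iff_ne_top.mpr (μ01_ne_top _)⟩

/-- Convert real halving of measures to ENNReal halving. -/
lemma toReal_half_imp {s t : Set ℝ} (h : (μ01 s).toReal = (1/2) * (μ01 t).toReal) :
    μ01 s = μ01 t / 2 := by
  rw [← ENNReal.toReal_eq_toReal_iff' (μ01_ne_top s)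
    ((ENNReal.div_lt_top (μ01_ne_top t) (by norm_num)).ne), h,
    ENNReal.toReal_div]
  simp only [ENNReal.toReal_ofNat]
  ring

lemma half_imp_toReal {s t : Set ℝ} (h : μ01 s = μ01 t / 2) :
    (μ01 s).toReal = (1/2) * (μ01 t).toReal := by
  rw [h, ENNReal.toReal_div]; simp; ring

/-- Base case: any measurable set can be split in half in measure. -/
lemma exists_half_measure (B : Set ℝ) (hB : MeasurableSet B) :
    ∃ A, MeasurableSet A ∧ A ⊆ B ∧ μ01 A = μ01 B / 2 := by
  set f : ℝ → ℝ := fun t => (μ01 (B ∩ Set.Iic t)).toReal with hf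
  have hmono : ∀ a b : ℝ, a ≤ b → f a ≤ f b := by
    intro a b hab
    apply ENNReal.toReal_le_toReal (μ01_ne_top _) (μ01_ne_top _) |>.mpr
    exact measure_mono (Set.inter_subset_inter_right _ (Set.Iic_subset_Iic.mpr hab))
  have hlip : ∀ a b : ℝ, a ≤ b → f b ≤ f a + (b - a) := by
    intro a b hab
    have hsub : B ∩ Set.Iic b ⊆ (B ∩ Set.Iic a) ∪ Set.Ioc a b := by
      intro x ⟨hxB, hxb⟩
      rcases le_or_gt x a with h | h
      · exact Or.inl ⟨hxB, h⟩
      · exact Or.inr ⟨h, hxb⟩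
    have h1 : μ01 (B ∩ Set.Iic b) ≤ μ01 (B ∩ Set.Iic a) + ENNReal.ofReal (b - a) := by
      refine le_trans (measure_mono hsub) (le_trans (measure_union_le _ _) ?_)
      gcongr
      calc μ01 (Set.Ioc a b) ≤ MeasureTheory.volume (Set.Ioc a b) :=
            Measure.restrict_le_self _
        _ = ENNReal.ofReal (b - a) := by rw [Real.volume_Ioc]
    calc f b ≤ ((μ01 (B ∩ Set.Iic a)) + ENNReal.ofReal (b - a)).toReal :=
          (ENNReal.toReal_le_toReal (μ01_ne_top _)
            (ENNReal.add_ne_top.mpr ⟨μ01_ne_top _, ENNReal.ofReal_ne_top⟩)).mpr h1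
      _ = f a + (b - a) := by
          rw [ENNReal.toReal_add (μ01_ne_top _) (by simp), ENNReal.toReal_ofReal (by linarith)]
  have hcont : Continuous f := by
    rw [Metric.continuous_iff]
    intro a ε hε
    refine ⟨ε, hε, fun b hb => ?_⟩
    rw [Real.dist_eq] at hb ⊢
    rcases le_total a b with h | h
    · have := hlip a b h; have := hmono a b h
      rw [abs_lt] at hb ⊢; constructor <;> linarith [abs_nonneg (b - a)]
    · have := hlip b a h; have := hmono b a h
      rw [abs_lt] at hb ⊢; constructor <;> linarith
  have hf0 : f (-1) = 0 := by
    have h2 : μ01 (B ∩ Set.Iic (-1)) = 0 := by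
      apply measure_mono_null (Set.inter_subset_right)
      rw [Measure.restrict_apply measurableSet_Iic]
      have : Set.Iic (-1:ℝ) ∩ Set.Icc 0 1 = ∅ := by
        ext x
        simp only [Set.mem_inter_iff, Set.mem_Iic, Set.mem_Icc, Set.mem_empty_iff_false,
          iff_false, not_and, and_imp]
        intro h1 h2 h3; linarith
      rw [this, measure_empty]
    show (μ01 (B ∩ Set.Iic (-1))).toReal = 0
    rw [h2, ENNReal.toReal_zero]
  have hf1 : f 1 = (μ01 B).toReal := by
    have h2 : μ01 (B ∩ Set.Iic 1) = μ01 B := by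
      rw [Measure.restrict_apply (hB.inter measurableSet_Iic), Measure.restrict_apply hB]
      congr 1
      ext x
      simp only [Set.mem_inter_iff, Set.mem_Iic, Set.mem_Icc]
      constructor
      · rintro ⟨⟨h1, _⟩, h3⟩; exact ⟨h1, h3⟩
      · rintro ⟨h1, h2, h3⟩; exact ⟨⟨h1, h3⟩, h2, h3⟩
    show (μ01 (B ∩ Set.Iic 1)).toReal = _
    rw [h2]
  have hmem : (1/2) * (μ01 B).toReal ∈ Set.Icc (f (-1)) (f 1) := by
    rw [hf0, hf1]
    constructor
    · positivity
    · nlinarith [ENNReal.toReal_nonneg (a := μ01 B)]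
  obtain ⟨t, _, ht⟩ := intermediate_value_Icc (by norm_num : (-1:ℝ) ≤ 1) hcont.continuousOn hmem
  exact ⟨B ∩ Set.Iic t, hB.inter measurableSet_Iic, Set.inter_subset_left,
    toReal_half_imp ht⟩

section Halving

variable (halve : Set ℝ → Set ℝ) (B : Set ℝ)

/-- Dyadic pieces obtained from iterated halving. -/
def pieceH : ℕ → ℕ → Set ℝ
  | 0, _ => B
  | (j+1), k =>
      if k % 2 = 0 then halve (pieceH j (k / 2))
      else pieceH j (k / 2) \ halve (pieceH j (k / 2))

/-- Union of the first `k` pieces at level `j`. -/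
def SH : ℕ → ℕ → Set ℝ
  | _, 0 => ∅
  | j, (k+1) => SH j k ∪ pieceH halve B j k

/-- The monotone family of subsets of `B`. -/
def AH (lam : ℝ) : Set ℝ := ⋃ j : ℕ, SH halve B j ⌊lam * 2 ^ j⌋₊

variable {halve B}

lemma pieceH_meas (hm : ∀ s, MeasurableSet s → MeasurableSet (halve s))
    (hB : MeasurableSet B) (j k : ℕ) : MeasurableSet (pieceH halve B j k) := by
  induction j generalizing k with
  | zero => exact hB
  | succ j ih =>
    rw [pieceH]
    split
    · exact hm _ (ih _)
    · exact (ih _).diff (hm _ (ih _))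

lemma pieceH_subset (hsb : ∀ s, halve s ⊆ s) (j k : ℕ) : pieceH halve B j k ⊆ B := by
  induction j generalizing k with
  | zero => exact subset_rfl
  | succ j ih =>
    rw [pieceH]
    split
    · exact (hsb _).trans (ih _)
    · exact Set.diff_subset.trans (ih _)

lemma pieceH_succ_subset (hsb : ∀ s, halve s ⊆ s) (j k : ℕ) :
    pieceH halve B (j+1) k ⊆ pieceH halve B j (k / 2) := by
  rw [pieceH]
  split
  · exact hsb _
  · exact Set.diff_subset

lemma pieceH_union (hsb : ∀ s, halve s ⊆ s) (j k : ℕ) :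
    pieceH halve B (j+1) (2*k) ∪ pieceH halve B (j+1) (2*k+1) = pieceH halve B j k := by
  have h1 : (2*k) % 2 = 0 := by omega
  have h2 : ¬ ((2*k+1) % 2 = 0) := by omega
  have h3 : 2*k/2 = k := by omega
  have h4 : (2*k+1)/2 = k := by omega
  conv_lhs => rw [pieceH, pieceH]
  rw [if_pos h1, if_neg h2, h3, h4]
  exact Set.union_diff_cancel (hsb _)

lemma pieceH_disj (hsb : ∀ s, halve s ⊆ s) (j : ℕ) :
    ∀ k k', k < 2^j → k' < 2^j → k ≠ k' →
      Disjoint (pieceH halve B j k) (pieceH halve B j k') := by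
  induction j with
  | zero => intro k k' hk hk' hne; omega
  | succ j ih =>
    intro k k' hk hk' hne
    have hpow : 2^(j+1) = 2*2^j := by ring
    rcases eq_or_ne (k/2) (k'/2) with h | h
    · have main : ∀ a b : ℕ, a % 2 = 0 → b % 2 = 1 → a/2 = b/2 →
          Disjoint (pieceH halve B (j+1) a) (pieceH halve B (j+1) b) := by
        intro a b ha hb hab
        conv_lhs => rw [pieceH]
        conv_rhs => rw [pieceH]
        rw [if_pos ha, if_neg (by omega), hab]
        exact disjoint_sdiff_self_right
      rcases Nat.mod_two_eq_zero_or_one k with h0 | h0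
      · exact main k k' h0 (by omega) h
      · exact (main k' k (by omega) h0 h.symm).symm
    · exact Set.disjoint_of_subset (pieceH_succ_subset hsb j k) (pieceH_succ_subset hsb j k')
        (ih _ _ (by omega) (by omega) h)

lemma pieceH_integral {f : ℝ → ℝ} (hf : Integrable f μ01)
    (hm : ∀ s, MeasurableSet s → MeasurableSet (halve s))
    (hsb : ∀ s, halve s ⊆ s) (hB : MeasurableSet B)
    (hint : ∀ s, MeasurableSet s → ∫ x in halve s, f x ∂μ01 = (1/2) * ∫ x in s, f x ∂μ01)
    (j k : ℕ) :
    ∫ x in pieceH halve B j k, f x ∂μ01 = (1/2)^j * ∫ x in B, f x ∂μ01 := by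
  induction j generalizing k with
  | zero => rw [pow_zero, one_mul]; rfl
  | succ j ih =>
    have hP := pieceH_meas hm hB j (k/2)
    rw [pieceH]
    split
    · rw [hint _ hP, ih]; ring
    · rw [integral_diff (hm _ hP) hf.integrableOn (hsb _), hint _ hP, ih]; ring

lemma SH_meas (hm : ∀ s, MeasurableSet s → MeasurableSet (halve s))
    (hB : MeasurableSet B) (j k : ℕ) : MeasurableSet (SH halve B j k) := by
  induction k with
  | zero => exact MeasurableSet.empty
  | succ k ih => exact ih.union (pieceH_meas hm hB j k)

lemma SH_subset (hsb : ∀ s, halve s ⊆ s) (j k : ℕ) : SH halve B j k ⊆ B := by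
  induction k with
  | zero => exact Set.empty_subset _
  | succ k ih => exact Set.union_subset ih (pieceH_subset hsb j k)

lemma SH_mono (j : ℕ) : Monotone (SH halve B j) :=
  monotone_nat_of_le_succ fun _ => Set.subset_union_left

lemma SH_disj_piece (hsb : ∀ s, halve s ⊆ s) (j : ℕ) :
    ∀ k m : ℕ, k ≤ m → m < 2^j → Disjoint (SH halve B j k) (pieceH halve B j m) := by
  intro k
  induction k with
  | zero => intro m _ _; simp [SH]
  | succ k ih =>
    intro m hk hm
    rw [SH]
    exact Set.disjoint_union_left.mpr
      ⟨ih m (by omega) hm, pieceH_disj hsb j k m (by omega) hm (by omega)⟩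

lemma SH_double (hsb : ∀ s, halve s ⊆ s) (j k : ℕ) :
    SH halve B (j+1) (2*k) = SH halve B j k := by
  induction k with
  | zero => rw [Nat.mul_zero]; rfl
  | succ k ih =>
    have h : 2*(k+1) = (2*k+1)+1 := by ring
    rw [h]
    show SH halve B (j+1) (2*k+1) ∪ pieceH halve B (j+1) (2*k+1) = _
    rw [SH, ih, Set.union_assoc, pieceH_union hsb j k]
    rfl

lemma SH_integral {f : ℝ → ℝ} (hf : Integrable f μ01)
    (hm : ∀ s, MeasurableSet s → MeasurableSet (halve s))
    (hsb : ∀ s, halve s ⊆ s) (hB : MeasurableSet B)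
    (hint : ∀ s, MeasurableSet s → ∫ x in halve s, f x ∂μ01 = (1/2) * ∫ x in s, f x ∂μ01)
    (j k : ℕ) (hk : k ≤ 2^j) :
    ∫ x in SH halve B j k, f x ∂μ01 = (k : ℝ) * (1/2)^j * ∫ x in B, f x ∂μ01 := by
  induction k with
  | zero => simp [SH]
  | succ k ih =>
    rw [SH, setIntegral_union (SH_disj_piece hsb j k k le_rfl (by omega))
        (pieceH_meas hm hB j k) hf.integrableOn hf.integrableOn, ih (by omega),
      pieceH_integral hf hm hsb hB hint j k]
    push_cast
    ring


lemma SH_zero (j : ℕ) : SH halve B j 0 = ∅ := rfl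

-- === new part ===

lemma AH_seq_mono (hsb : ∀ s, halve s ⊆ s) {lam : ℝ} (h0 : 0 ≤ lam) :
    Monotone (fun j : ℕ => SH halve B j ⌊lam * 2 ^ j⌋₊) := by
  apply monotone_nat_of_le_succ
  intro j
  have hfl := Nat.floor_le (by positivity : (0:ℝ) ≤ lam * 2^j)
  have h1 : 2 * ⌊lam * 2^j⌋₊ ≤ ⌊lam * 2^(j+1)⌋₊ := by
    apply Nat.le_floor
    push_cast
    rw [pow_succ]
    nlinarith
  calc SH halve B j ⌊lam * 2^j⌋₊ = SH halve B (j+1) (2*⌊lam * 2^j⌋₊) :=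
        (SH_double hsb _ _).symm
    _ ⊆ SH halve B (j+1) ⌊lam * 2^(j+1)⌋₊ := SH_mono _ h1

lemma AH_meas (hm : ∀ s, MeasurableSet s → MeasurableSet (halve s))
    (hB : MeasurableSet B) (lam : ℝ) : MeasurableSet (AH halve B lam) :=
  MeasurableSet.iUnion fun j => SH_meas hm hB j _

lemma AH_subset (hsb : ∀ s, halve s ⊆ s) (lam : ℝ) : AH halve B lam ⊆ B :=
  Set.iUnion_subset fun j => SH_subset hsb j _

lemma AH_mono {a b : ℝ} (hab : a ≤ b) : AH halve B a ⊆ AH halve B b :=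
  Set.iUnion_mono fun j => SH_mono j (Nat.floor_le_floor
    (mul_le_mul_of_nonneg_right hab (by positivity)))

lemma AH_integral {f : ℝ → ℝ} (hf : Integrable f μ01)
    (hm : ∀ s, MeasurableSet s → MeasurableSet (halve s))
    (hsb : ∀ s, halve s ⊆ s) (hB : MeasurableSet B)
    (hint : ∀ s, MeasurableSet s → ∫ x in halve s, f x ∂μ01 = (1/2) * ∫ x in s, f x ∂μ01)
    {lam : ℝ} (h0 : 0 ≤ lam) (h1 : lam ≤ 1) :
    ∫ x in AH halve B lam, f x ∂μ01 = lam * ∫ x in B, f x ∂μ01 := by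
  have hmono := AH_seq_mono (B := B) hsb h0
  have hmeas : ∀ j : ℕ, MeasurableSet (SH halve B j ⌊lam * 2^j⌋₊) :=
    fun j => SH_meas hm hB j _
  have htend := tendsto_setIntegral_of_monotone hmeas hmono hf.integrableOn
  have hk : ∀ j : ℕ, ⌊lam * 2^j⌋₊ ≤ 2^j := by
    intro j
    calc ⌊lam * 2^j⌋₊ ≤ ⌊((2^j : ℕ) : ℝ)⌋₊ := by
          apply Nat.floor_le_floor
          push_cast
          nlinarith [pow_pos (by norm_num : (0:ℝ) < 2) j]
      _ = 2^j := Nat.floor_natCast _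
  have heq : ∀ j : ℕ, ∫ x in SH halve B j ⌊lam * 2^j⌋₊, f x ∂μ01
      = ((⌊lam * 2^j⌋₊ : ℝ) * (1/2)^j) * ∫ x in B, f x ∂μ01 :=
    fun j => SH_integral hf hm hsb hB hint j _ (hk j)
  have htend2 : Tendsto (fun j : ℕ => (⌊lam * 2^j⌋₊ : ℝ) * (1/2)^j) atTop (𝓝 lam) := by
    have hbase : Tendsto (fun x : ℝ => (⌊lam * x⌋₊ : ℝ) / x) atTop (𝓝 lam) :=
      tendsto_nat_floor_mul_div_atTop h0
    have hpow : Tendsto (fun j : ℕ => (2:ℝ)^j) atTop atTop :=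
      tendsto_pow_atTop_atTop_of_one_lt one_lt_two
    have := hbase.comp hpow
    convert this using 2 with j
    simp only [Function.comp_apply, div_eq_mul_inv]
    congr 1
    rw [one_mul, inv_pow]
  have htend3 : Tendsto (fun j : ℕ => ∫ x in SH halve B j ⌊lam * 2^j⌋₊, f x ∂μ01)
      atTop (𝓝 (lam * ∫ x in B, f x ∂μ01)) := by
    simp only [heq]
    exact htend2.mul_const _
  exact (tendsto_nhds_unique htend htend3)

lemma AH_split {f : ℝ → ℝ} (hf : Integrable f μ01)
    (hm : ∀ s, MeasurableSet s → MeasurableSet (halve s))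
    (hB : MeasurableSet B) {a b : ℝ} (hab : a ≤ b) :
    ∫ x in AH halve B b, f x ∂μ01
      = ∫ x in AH halve B a, f x ∂μ01 + ∫ x in AH halve B b \ AH halve B a, f x ∂μ01 := by
  have hu : AH halve B a ∪ (AH halve B b \ AH halve B a) = AH halve B b :=
    Set.union_diff_cancel (AH_mono hab)
  conv_lhs => rw [← hu]
  rw [setIntegral_union disjoint_sdiff_self_right
    ((AH_meas hm hB b).diff (AH_meas hm hB a)) hf.integrableOn hf.integrableOn]

lemma AH_diff_integral {f : ℝ → ℝ} (hf : Integrable f μ01)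
    (hm : ∀ s, MeasurableSet s → MeasurableSet (halve s))
    (hsb : ∀ s, halve s ⊆ s) (hB : MeasurableSet B)
    (hint : ∀ s, MeasurableSet s → ∫ x in halve s, f x ∂μ01 = (1/2) * ∫ x in s, f x ∂μ01)
    {a b : ℝ} (h0 : 0 ≤ a) (hab : a ≤ b) (h1 : b ≤ 1) :
    ∫ x in AH halve B b \ AH halve B a, f x ∂μ01 = (b - a) * ∫ x in B, f x ∂μ01 := by
  have h := AH_split hf hm hB hab
  rw [AH_integral hf hm hsb hB hint (le_trans h0 hab) h1,
    AH_integral hf hm hsb hB hint h0 (le_trans hab h1)] at h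
  linarith

-- ==== new part ====

/-- halving of measure gives halving of the integral of the constant 1. -/
lemma one_hint (hμ : ∀ s, MeasurableSet s → μ01 (halve s) = μ01 s / 2) :
    ∀ s, MeasurableSet s → ∫ x in halve s, (1:ℝ) ∂μ01 = (1/2) * ∫ x in s, (1:ℝ) ∂μ01 := by
  intro s hs
  rw [setIntegral_const, setIntegral_const, smul_eq_mul, smul_eq_mul, mul_one, mul_one]
  exact half_imp_toReal (hμ s hs)

lemma AH_diff_measure
    (hm : ∀ s, MeasurableSet s → MeasurableSet (halve s))
    (hsb : ∀ s, halve s ⊆ s) (hB : MeasurableSet B)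
    (hμ : ∀ s, MeasurableSet s → μ01 (halve s) = μ01 s / 2)
    {a b : ℝ} (h0 : 0 ≤ a) (hab : a ≤ b) (h1 : b ≤ 1) :
    μ01 (AH halve B b \ AH halve B a)
      = ENNReal.ofReal ((b - a) * (μ01 B).toReal) := by
  have h := AH_diff_integral (f := fun _ => (1:ℝ)) (integrable_const 1) hm hsb hB
    (one_hint hμ) h0 hab h1
  rw [setIntegral_const, setIntegral_const, smul_eq_mul, smul_eq_mul, mul_one, mul_one] at h
  rw [measureReal_def, measureReal_def] at h
  rw [← h, ENNReal.ofReal_toReal (μ01_ne_top _)]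

lemma F_continuousOn {h : ℝ → ℝ} (hh : Integrable h μ01)
    (hm : ∀ s, MeasurableSet s → MeasurableSet (halve s))
    (hsb : ∀ s, halve s ⊆ s) (hB : MeasurableSet B)
    (hμ : ∀ s, MeasurableSet s → μ01 (halve s) = μ01 s / 2) :
    ContinuousOn (fun t => ∫ x in AH halve B t, h x ∂μ01) (Set.Icc 0 1) := by
  set F : ℝ → ℝ := fun t => ∫ x in AH halve B t, h x ∂μ01 with hF
  rw [Metric.continuousOn_iff]
  intro a ha ε hε
  have hfin : ∫⁻ x, ENNReal.ofReal ‖h x‖ ∂μ01 ≠ ⊤ := by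
    simp_rw [ofReal_norm_eq_enorm]
    exact hh.2.ne
  obtain ⟨δ, hδ0, hδ⟩ := exists_pos_setLIntegral_lt_of_measure_lt hfin
    (ε := ENNReal.ofReal ε) (ENNReal.ofReal_pos.mpr hε).ne'
  set δ' : ENNReal := min δ 1 with hδ'def
  have hδ'0 : 0 < δ' := lt_min hδ0 (by norm_num)
  have hδ'top : δ' ≠ ⊤ := (min_le_right _ _).trans_lt (by norm_num) |>.ne
  have hδ'r : 0 < δ'.toReal := ENNReal.toReal_pos hδ'0.ne' hδ'top
  set c : ℝ := (μ01 B).toReal with hc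
  have hc0 : 0 ≤ c := ENNReal.toReal_nonneg
  refine ⟨δ'.toReal / (c + 1), by positivity, ?_⟩
  have key : ∀ u v : ℝ, 0 ≤ u → u ≤ v → v ≤ 1 → v - u < δ'.toReal / (c+1) →
      |F v - F u| < ε := by
    intro u v hu huv hv1 hlt
    have hsplit := AH_split hh hm hB huv
    have hdiff : F v - F u = ∫ x in AH halve B v \ AH halve B u, h x ∂μ01 := by
      rw [hF]; simp only; linarith [hsplit]
    have hmeaslt : μ01 (AH halve B v \ AH halve B u) < δ := by
      rw [AH_diff_measure hm hsb hB hμ hu huv hv1]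
      have harith : (v - u) * c < δ'.toReal := by
        have hc1 : (0:ℝ) < c + 1 := by positivity
        have h1 : (v - u) * (c + 1) < (δ'.toReal / (c+1)) * (c + 1) :=
          mul_lt_mul_of_pos_right hlt hc1
        rw [div_mul_cancel₀ _ hc1.ne'] at h1
        nlinarith
      calc ENNReal.ofReal ((v - u) * c) < δ' :=
            (ENNReal.ofReal_lt_iff_lt_toReal (by nlinarith) hδ'top).mpr harith
        _ ≤ δ := min_le_left _ _
    have hbound : |F v - F u| ≤ (∫⁻ x in AH halve B v \ AH halve B u,
        ENNReal.ofReal ‖h x‖ ∂μ01).toReal := by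
      rw [hdiff, ← Real.norm_eq_abs]
      exact norm_integral_le_lintegral_norm _
    have hlint := hδ _ hmeaslt
    calc |F v - F u| ≤ _ := hbound
      _ < ε := ENNReal.toReal_lt_of_lt_ofReal hlint
  intro b hb hdist
  rw [Real.dist_eq] at hdist
  rw [Real.dist_eq]
  obtain ⟨hd1, hd2⟩ := abs_lt.mp hdist
  rcases le_total a b with hab | hab
  · exact key a b ha.1 hab hb.2 (by linarith)
  · rw [abs_sub_comm]
    exact key b a hb.1 hab ha.2 (by linarith)

/-- The heart of the induction: from a halver for measure and the family `K`,
produce a halving set that also halves `h`. -/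
lemma heart {p : ℕ} (K : Fin p → ℝ → ℝ) (hK : ∀ i, Integrable (K i) μ01)
    {h : ℝ → ℝ} (hh : Integrable h μ01)
    (halver : ∀ s, MeasurableSet s → ∃ A, MeasurableSet A ∧ A ⊆ s ∧ μ01 A = μ01 s / 2 ∧
      ∀ i, ∫ x in A, K i x ∂μ01 = (1/2) * ∫ x in s, K i x ∂μ01)
    (B : Set ℝ) (hB : MeasurableSet B) :
    ∃ A, MeasurableSet A ∧ A ⊆ B ∧ μ01 A = μ01 B / 2 ∧
      (∀ i, ∫ x in A, K i x ∂μ01 = (1/2) * ∫ x in B, K i x ∂μ01) ∧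
      ∫ x in A, h x ∂μ01 = (1/2) * ∫ x in B, h x ∂μ01 := by
  classical
  set halve : Set ℝ → Set ℝ :=
    fun s => if hs : MeasurableSet s then (halver s hs).choose else ∅ with hhalve
  have heq : ∀ s (hs : MeasurableSet s), halve s = (halver s hs).choose := by
    intro s hs
    simp only [hhalve]
    rw [dif_pos hs]
  have hm : ∀ s, MeasurableSet s → MeasurableSet (halve s) := by
    intro s hs; rw [heq s hs]; exact (halver s hs).choose_spec.1
  have hsb : ∀ s, halve s ⊆ s := by
    intro s
    by_cases hs : MeasurableSet s
    · rw [heq s hs]; exact (halver s hs).choose_spec.2.1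
    · simp only [hhalve]
      rw [dif_neg hs]
      exact Set.empty_subset _
  have hμ : ∀ s, MeasurableSet s → μ01 (halve s) = μ01 s / 2 := by
    intro s hs; rw [heq s hs]; exact (halver s hs).choose_spec.2.2.1
  have hint : ∀ i, ∀ s, MeasurableSet s →
      ∫ x in halve s, K i x ∂μ01 = (1/2) * ∫ x in s, K i x ∂μ01 := by
    intro i s hs; rw [heq s hs]
    exact (halver s hs).choose_spec.2.2.2 i
  set F : ℝ → ℝ := fun t => ∫ x in AH halve B t, h x ∂μ01 with hF
  have hA0 : AH halve B 0 = ∅ := by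
    rw [AH]
    simp only [zero_mul, Nat.floor_zero, SH_zero]
    exact Set.iUnion_empty
  have hF0 : F 0 = 0 := by rw [hF]; simp only [hA0, Measure.restrict_empty,
    integral_zero_measure]
  have hF1 : F 1 = ∫ x in B, h x ∂μ01 := by
    have hmeq : μ01 (AH halve B 1) = μ01 B := by
      have := AH_integral (f := fun _ => (1:ℝ)) (integrable_const 1) hm hsb hB
        (one_hint hμ) (le_refl 0 |>.trans zero_le_one) le_rfl
      rw [setIntegral_const, setIntegral_const, smul_eq_mul, smul_eq_mul, mul_one, mul_one,
        one_mul] at this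
      exact (ENNReal.toReal_eq_toReal_iff' (μ01_ne_top _) (μ01_ne_top _)).mp this
    have hnull : μ01 (B \ AH halve B 1) = 0 := by
      rw [measure_diff (AH_subset hsb 1) (AH_meas hm hB 1).nullMeasurableSet (μ01_ne_top _),
        hmeq, tsub_self]
    have haeeq : AH halve B 1 =ᵐ[μ01] B := by
      rw [MeasureTheory.ae_eq_set]
      constructor
      · rw [Set.diff_eq_empty.mpr (AH_subset hsb 1)]; exact measure_empty
      · exact hnull
    exact setIntegral_congr_set haeeq
  set φ : ℝ → ℝ := fun t => F (t + 1/2) - F t with hφ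
  have hφcont : ContinuousOn φ (Set.uIcc 0 (1/2)) := by
    rw [Set.uIcc_of_le (by norm_num)]
    have h1 := F_continuousOn hh hm hsb hB hμ
    have c2 : ContinuousOn (fun t => F (t + 1/2)) (Set.Icc 0 (1/2)) := by
      refine ContinuousOn.comp (f := fun t : ℝ => t + 1/2) h1
        ((continuous_id.add continuous_const).continuousOn) ?_
      intro t ht
      exact ⟨by linarith [ht.1], by linarith [ht.2]⟩
    exact c2.sub (h1.mono (Set.Icc_subset_Icc le_rfl (by norm_num)))
  have hφsum : φ 0 + φ (1/2) = ∫ x in B, h x ∂μ01 := by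
    rw [hφ]
    simp only
    rw [hF0]
    norm_num
    rw [hF1]
  have hmem : (1/2) * ∫ x in B, h x ∂μ01 ∈ Set.uIcc (φ 0) (φ (1/2)) := by
    rcases le_total (φ 0) (φ (1/2)) with hle | hle
    · rw [Set.uIcc_of_le hle]
      constructor <;> [linarith; linarith]
    · rw [Set.uIcc_of_ge hle]
      constructor <;> [linarith; linarith]
  obtain ⟨t, ht, hφt⟩ := intermediate_value_uIcc hφcont hmem
  rw [Set.uIcc_of_le (by norm_num : (0:ℝ) ≤ 1/2)] at ht
  obtain ⟨ht0, ht12⟩ := ht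
  have ht1 : t + 1/2 ≤ 1 := by linarith
  have htt : t ≤ t + 1/2 := by linarith
  refine ⟨AH halve B (t + 1/2) \ AH halve B t,
    (AH_meas hm hB _).diff (AH_meas hm hB _),
    Set.diff_subset.trans (AH_subset hsb _), ?_, ?_, ?_⟩
  · apply toReal_half_imp
    have := AH_diff_measure hm hsb hB hμ ht0 htt ht1
    rw [this, ENNReal.toReal_ofReal (by nlinarith [ENNReal.toReal_nonneg (a := μ01 B)])]
    have harith : t + 1/2 - t = 1/2 := by ring
    rw [harith]
  · intro i
    rw [AH_diff_integral (hK i) hm hsb hB (hint i) ht0 htt ht1]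
    have harith : t + 1/2 - t = 1/2 := by ring
    rw [harith]
  · have hsplit := AH_split hh hm hB htt
    have : ∫ x in AH halve B (t + 1/2) \ AH halve B t, h x ∂μ01 = φ t := by
      rw [hφ]; simp only; linarith [hsplit]
    rw [this, hφt]

end Halving

/-- Simultaneous halving of finitely many integrals over measurable sets. -/
lemma halving (p : ℕ) : ∀ (K : Fin p → ℝ → ℝ), (∀ i, Integrable (K i) μ01) →
    ∀ B : Set ℝ, MeasurableSet B → ∃ A, MeasurableSet A ∧ A ⊆ B ∧
      μ01 A = μ01 B / 2 ∧ ∀ i, ∫ x in A, K i x ∂μ01 = (1/2) * ∫ x in B, K i x ∂μ01 := by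
  induction p with
  | zero =>
    intro K _ B hB
    obtain ⟨A, hAm, hAs, hAμ⟩ := exists_half_measure B hB
    exact ⟨A, hAm, hAs, hAμ, fun i => i.elim0⟩
  | succ p ih =>
    intro K hK B hB
    obtain ⟨A, hAm, hAs, hAμ, hint, hlast⟩ := heart (fun i : Fin p => K i.castSucc)
      (fun i => hK _) (hK (Fin.last p))
      (fun s hs => ih (fun i => K i.castSucc) (fun i => hK _) s hs) B hB
    refine ⟨A, hAm, hAs, hAμ, fun i => ?_⟩
    refine Fin.lastCases ?_ ?_ i
    · exact hlast
    · intro j; exact hint j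

/-- For any measurable `B ⊆ [0,1]` and `g 1, …, g n ∈ L¹[0,1]` there is a measurable
`B₁ ⊆ B` with `μ B₁ = μ B / 2` and `∫_{B₁} gᵢ = (1/2) ∫_B gᵢ` for every `i`. -/
theorem stmt13 (B : Set ℝ) (hB : MeasurableSet B) (hB1 : B ⊆ Set.Icc 0 1)
    (n : ℕ) (g : Fin n → ℝ → ℝ) (hg : ∀ i, Integrable (g i) μ01) :
    ∃ B₁ : Set ℝ, MeasurableSet B₁ ∧ B₁ ⊆ B ∧ μ01 B₁ = μ01 B / 2 ∧
      ∀ i, ∫ x in B₁, g i x ∂μ01 = (1 / 2) * ∫ x in B, g i x ∂μ01 := by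
  obtain ⟨A, hAm, hAs, hAμ, hint⟩ := halving n g hg B hB
  exact ⟨A, hAm, hAs, hAμ, hint⟩
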